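/- Let k, l, δ be integers with k ≥ 0, |l| ≤ k and k ≡ l (mod 2), and let λ be a real number with λ > 0 and λ ∉ ℤ. For nonnegative integers K₁, K₂, p with p + K₁ ≤ (k−l)/2 and p + K₂ ≤ (k+l)/2, define S(K₁,K₂,p) = (−1)^{K₁+K₂} · (Γ(K₁+p+λ)/(Γ(λ)·K₁!·p!)) · ((K₂+p)!/(K₂!·p!)) · Γ((k−l+λ+δ)/2 + 1) / ( ((k−l)/2 − p − K₁)! · ((k+l)/2 − p − K₂)! · Γ((λ+δ−k−l)/2 + K₁ + K₂ + 2p + 1) ). Then the (finite) sum of S(K₁,K₂,p) over all such triples (K₁,K₂,p) equals (−1)^{k} · Γ(1 + (k+l−λ−δ)/2) · Γ((λ−δ)/2) / ( ((k+l)/2)! · ((k−l)/2)! · Γ(1 − (λ+δ)/2) · Γ((λ−δ)/2 − (k−l)/2) ). -/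

import Mathlib

open Finset Real

/-- Rising factorial (Pochhammer symbol) on ℝ. -/
def poch (x : ℝ) : ℕ → ℝ
  | 0 => 1
  | n + 1 => poch x n * (x + n)

@[simp] lemma poch_zero (x : ℝ) : poch x 0 = 1 := rfl

lemma poch_succ (x : ℝ) (n : ℕ) : poch x (n + 1) = poch x n * (x + n) := rfl

lemma poch_succ_left (x : ℝ) (n : ℕ) : poch x (n + 1) = x * poch (x + 1) n := by
  induction n with
  | zero => simp [poch]
  | succ n ih =>
      rw [poch_succ, ih, poch_succ]
      push_cast
      ring

/-- Reflection of Pochhammer: `(1-x)_n = (-1)^n (x-n)_n`. -/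
lemma poch_reflect (n : ℕ) : ∀ x : ℝ, poch (1 - x) n = (-1) ^ n * poch (x - n) n := by
  induction n with
  | zero => simp
  | succ n ih =>
      intro x
      rw [poch_succ, ih x, poch_succ_left]
      have h1 : x - ((n+1:ℕ):ℝ) + 1 = x - n := by push_cast; ring
      rw [h1]
      push_cast
      ring

/-- `Γ(x+n) = (x)_n Γ(x)` provided `x` is not a nonpositive integer. -/
lemma Gamma_add_nat {x : ℝ} (hx : ∀ m : ℕ, x ≠ -m) (n : ℕ) :
    Real.Gamma (x + n) = poch x n * Real.Gamma x := by
  induction n with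
  | zero => simp
  | succ n ih =>
      have hxn : x + n ≠ 0 := fun h => hx n (by linarith)
      have h2 : x + ((n + 1 : ℕ) : ℝ) = (x + n) + 1 := by push_cast; ring
      rw [h2, Real.Gamma_add_one hxn, ih, poch_succ]
      ring

/-- Polynomial Chu–Vandermonde identity. -/
lemma poch_vandermonde (β : ℝ) : ∀ (n : ℕ) (γ : ℝ),
    ∑ j ∈ range (n + 1),
      (-1 : ℝ) ^ j * (n.choose j : ℝ) * poch β j * poch (γ + j) (n - j)
      = poch (γ - β) n := by
  intro n
  induction n with
  | zero => simp
  | succ n ih =>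
      intro γ
      set F : ℕ → ℝ := fun j =>
        (-1 : ℝ) ^ j * ((n+1).choose j : ℝ) * poch β j * poch (γ + j) (n + 1 - j) with hF
      set G : ℕ → ℝ := fun j =>
        (-1 : ℝ) ^ j * (n.choose j : ℝ) * poch β j * poch (γ + j) (n + 1 - j) with hG
      set A : ℕ → ℝ := fun j =>
        (-1 : ℝ) ^ j * (n.choose j : ℝ) * poch β j * (-(β + j)) * poch ((γ+1) + j) (n - j) with hA
      have step1 : ∑ j ∈ range (n + 2), F j
          = (∑ i ∈ range (n + 1), (A i + G (i+1))) + F 0 := by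
        rw [Finset.sum_range_succ' F (n+1)]
        congr 1
        refine Finset.sum_congr rfl fun i hi => ?_
        have hns : n + 1 - (i + 1) = n - i := by omega
        have hch : (((n+1).choose (i+1) : ℕ) : ℝ)
            = (n.choose i : ℝ) + (n.choose (i+1) : ℝ) := by
          rw [Nat.choose_succ_succ]; push_cast; ring
        simp only [hF, hG, hA, hns, hch]
        have hpb : poch β (i+1) = poch β i * (β + i) := poch_succ β i
        rw [hpb]
        have hcast : (((i+1:ℕ)) : ℝ) = (i:ℝ) + 1 := by push_cast; ring
        rw [hcast]
        have hpg : poch (γ + ((i:ℝ)+1)) (n - i) = poch ((γ+1) + i) (n - i) := by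
          ring_nf
        rw [hpg]
        ring
      have step2 : (∑ i ∈ range (n + 1), G (i+1)) + F 0 = ∑ j ∈ range (n + 1), G j := by
        have h0 : F 0 = G 0 := by simp [hF, hG]
        rw [h0, ← Finset.sum_range_succ' G (n+1), Finset.sum_range_succ]
        have : G (n+1) = 0 := by simp [hG, Nat.choose_succ_self]
        rw [this, add_zero]
      have step3 : ∀ j ∈ range (n + 1),
          G j = (-1 : ℝ) ^ j * (n.choose j : ℝ) * poch β j * ((γ + j) * poch ((γ+1) + j) (n - j)) := by
        intro j hj
        have hjn : j ≤ n := by simpa [Nat.lt_succ_iff] using hj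
        have hns : n + 1 - j = (n - j) + 1 := by omega
        simp only [hG, hns]
        rw [poch_succ_left]
        have : γ + (j:ℝ) + 1 = (γ + 1) + j := by ring
        rw [this]
      calc ∑ j ∈ range (n + 2), F j
          = (∑ i ∈ range (n + 1), A i) + ((∑ i ∈ range (n + 1), G (i+1)) + F 0) := by
            rw [step1, Finset.sum_add_distrib]; ring
        _ = ∑ j ∈ range (n + 1), (A j + G j) := by
            rw [step2, Finset.sum_add_distrib]
        _ = ∑ j ∈ range (n + 1), (γ - β) *
              ((-1 : ℝ) ^ j * (n.choose j : ℝ) * poch β j * poch ((γ+1) + j) (n - j)) := by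
            refine Finset.sum_congr rfl fun j hj => ?_
            rw [step3 j hj]
            simp only [hA]
            ring
        _ = (γ - β) * poch ((γ + 1) - β) n := by
            rw [← Finset.mul_sum, ih (γ+1)]
        _ = poch (γ - β) (n + 1) := by
            rw [poch_succ_left]
            congr 2
            ring

/-- Chu–Vandermonde summation in Gamma form. -/
lemma gamma_vandermonde (n : ℕ) (β γ : ℝ) (hβ : ∀ m : ℕ, β ≠ -m) (hγ : ∀ m : ℕ, γ ≠ -m) :
    ∑ j ∈ range (n + 1),
      (-1 : ℝ) ^ j * (n.choose j : ℝ) * Real.Gamma (β + j) / Real.Gamma (γ + j)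
      = Real.Gamma β * poch (γ - β) n / Real.Gamma (γ + n) := by
  have hγj : ∀ j : ℕ, ∀ m : ℕ, γ + (j:ℝ) ≠ -m := by
    intro j m h
    exact hγ (m + j) (by push_cast; linarith)
  have hΓγ : ∀ j : ℕ, Real.Gamma (γ + j) ≠ 0 := fun j => Real.Gamma_ne_zero (hγj j)
  have hstep : ∀ j ∈ range (n + 1),
      (-1 : ℝ) ^ j * (n.choose j : ℝ) * Real.Gamma (β + j) / Real.Gamma (γ + j)
        = (Real.Gamma β / Real.Gamma (γ + n)) *
          ((-1 : ℝ) ^ j * (n.choose j : ℝ) * poch β j * poch (γ + j) (n - j)) := by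
    intro j hj
    have hjn : j ≤ n := by simpa [Nat.lt_succ_iff] using hj
    have hEq : Real.Gamma (γ + n) = poch (γ + j) (n - j) * Real.Gamma (γ + j) := by
      have hc : γ + (n:ℝ) = (γ + j) + ((n - j : ℕ) : ℝ) := by
        push_cast [Nat.cast_sub hjn]; ring
      rw [hc, Gamma_add_nat (hγj j)]
    have hpne : poch (γ + j) (n - j) ≠ 0 := by
      intro h0
      exact Real.Gamma_ne_zero (hγj n) (by rw [hEq, h0, zero_mul])
    rw [Gamma_add_nat hβ j, hEq]
    rw [div_mul_eq_mul_div, div_eq_div_iff (hΓγ j) (by exact mul_ne_zero hpne (hΓγ j))]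
    ring
  rw [Finset.sum_congr rfl hstep, ← Finset.mul_sum, poch_vandermonde β n γ]
  ring

/-- Vandermonde in the symmetric form `∑ C(q,p) C(r,p) = C(q+r, q)`. -/
lemma nat_vandermonde (q r : ℕ) :
    ∑ p ∈ range (min q r + 1), (q.choose p) * (r.choose p) = (q + r).choose q := by
  have h1 : ∑ p ∈ range (q + 1), (q.choose p) * (r.choose p) = (q + r).choose q := by
    rw [Nat.add_choose_eq q r q, Finset.Nat.sum_antidiagonal_eq_sum_range_succ_mk]
    rw [← Finset.sum_range_reflect (fun i => q.choose i * r.choose (q - i)) (q+1)]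
    refine Finset.sum_congr rfl fun p hp => ?_
    have hpq : p ≤ q := by simpa [Nat.lt_succ_iff] using hp
    have e1 : q + 1 - 1 - p = q - p := by omega
    have e2 : q - (q - p) = p := by omega
    rw [e1, e2, Nat.choose_symm hpq]
  rw [← h1]
  refine Finset.sum_subset (Finset.range_subset_range.2 (by omega)) fun p hp hnp => ?_
  have : r < p := by
    simp only [Finset.mem_range] at hp hnp
    omega
  rw [Nat.choose_eq_zero_of_lt this, mul_zero]

set_option maxHeartbeats 1000000 in
theorem key_sum (a b : ℕ) (lam μ : ℝ) (hlam : 0 < lam) (hμ : ∀ t : ℤ, μ ≠ t) :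
    (∑ p ∈ Finset.range (min a b + 1), ∑ K₁ ∈ Finset.range (a - p + 1),
        ∑ K₂ ∈ Finset.range (b - p + 1),
        (-1 : ℝ) ^ (K₁ + K₂) *
          (Real.Gamma ((K₁ : ℝ) + (p : ℝ) + lam) /
            (Real.Gamma lam * (K₁.factorial : ℝ) * (p.factorial : ℝ))) *
          (((K₂ + p).factorial : ℝ) / ((K₂.factorial : ℝ) * (p.factorial : ℝ))) *
          Real.Gamma ((a : ℝ) + μ + 1) /
          (((a - p - K₁).factorial : ℝ) * ((b - p - K₂).factorial : ℝ) *
            Real.Gamma (μ - (b : ℝ) + (K₁ : ℝ) + (K₂ : ℝ) + 2 * (p : ℝ) + 1)))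
      = poch (μ - b) b * poch (μ + 1 - lam) a / ((a.factorial : ℝ) * (b.factorial : ℝ)) := by
  have hpole : ∀ (x : ℝ) (c : ℤ), x = μ + c → ∀ m : ℕ, x ≠ -m := by
    intro x c hx m hm
    rw [hx] at hm
    exact hμ (-(m : ℤ) - c) (by push_cast; linarith)
  have hlamm : ∀ m : ℕ, lam ≠ -(m : ℝ) := by
    intro m h
    have : (0:ℝ) ≤ m := Nat.cast_nonneg m
    linarith
  have hΓlam : Real.Gamma lam ≠ 0 := Real.Gamma_ne_zero hlamm
  set F : ℕ → ℕ → ℕ → ℝ := fun p K₁ K₂ =>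
    (-1 : ℝ) ^ (K₁ + K₂) *
      (Real.Gamma ((K₁ : ℝ) + (p : ℝ) + lam) /
        (Real.Gamma lam * (K₁.factorial : ℝ) * (p.factorial : ℝ))) *
      (((K₂ + p).factorial : ℝ) / ((K₂.factorial : ℝ) * (p.factorial : ℝ))) *
      Real.Gamma ((a : ℝ) + μ + 1) /
      (((a - p - K₁).factorial : ℝ) * ((b - p - K₂).factorial : ℝ) *
        Real.Gamma (μ - (b : ℝ) + (K₁ : ℝ) + (K₂ : ℝ) + 2 * (p : ℝ) + 1)) with hFdef
  -- Step A : reindex (p, K₁, K₂) ↦ (q, r, p) with q = K₁ + p, r = K₂ + p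
  have stepA : (∑ p ∈ Finset.range (min a b + 1), ∑ K₁ ∈ Finset.range (a - p + 1),
        ∑ K₂ ∈ Finset.range (b - p + 1), F p K₁ K₂)
      = ∑ q ∈ Finset.range (a + 1), ∑ r ∈ Finset.range (b + 1),
          ∑ p ∈ Finset.range (min q r + 1), F p (q - p) (r - p) := by
    have l1 : (∑ p ∈ Finset.range (min a b + 1), ∑ K₁ ∈ Finset.range (a - p + 1),
          ∑ K₂ ∈ Finset.range (b - p + 1), F p K₁ K₂)
        = ∑ x ∈ (Finset.range (min a b + 1)).sigma
            (fun p => Finset.range (a - p + 1) ×ˢ Finset.range (b - p + 1)),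
            F x.1 x.2.1 x.2.2 := by
      rw [Finset.sum_sigma]
      exact Finset.sum_congr rfl fun p _ => (Finset.sum_product' _ _ (fun K₁ K₂ => F p K₁ K₂)).symm
    have l2 : (∑ q ∈ Finset.range (a + 1), ∑ r ∈ Finset.range (b + 1),
          ∑ p ∈ Finset.range (min q r + 1), F p (q - p) (r - p))
        = ∑ x ∈ ((Finset.range (a + 1)) ×ˢ (Finset.range (b + 1))).sigma
            (fun qr => Finset.range (min qr.1 qr.2 + 1)),
            F x.2 (x.1.1 - x.2) (x.1.2 - x.2) := by
      rw [Finset.sum_sigma]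
      exact (Finset.sum_product' _ _ (fun q r => ∑ p ∈ Finset.range (min q r + 1),
        F p (q - p) (r - p))).symm
    rw [l1, l2]
    refine Finset.sum_nbij' (i := fun x => ⟨(x.2.1 + x.1, x.2.2 + x.1), x.1⟩)
      (j := fun y => ⟨y.2, (y.1.1 - y.2, y.1.2 - y.2)⟩) ?_ ?_ ?_ ?_ ?_
    · intro x hx
      simp only [Finset.mem_sigma, Finset.mem_product, Finset.mem_range] at hx ⊢
      omega
    · intro y hy
      simp only [Finset.mem_sigma, Finset.mem_product, Finset.mem_range] at hy ⊢
      omega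
    · intro x hx
      simp only [Nat.add_sub_cancel]
    · intro y hy
      simp only [Finset.mem_sigma, Finset.mem_product, Finset.mem_range] at hy
      have h1 : y.1.1 - y.2 + y.2 = y.1.1 := by omega
      have h2 : y.1.2 - y.2 + y.2 = y.1.2 := by omega
      simp only [h1, h2]
    · intro x hx
      simp only [Nat.add_sub_cancel]
  rw [stepA]
  have hfne : ∀ n : ℕ, ((n.factorial : ℝ)) ≠ 0 := fun n => Nat.cast_ne_zero.2 n.factorial_ne_zero
  -- Step B : closed form of the inner p-sum (Vandermonde over ℕ)
  have stepB : ∀ q ∈ Finset.range (a + 1), ∀ r ∈ Finset.range (b + 1),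
      (∑ p ∈ Finset.range (min q r + 1), F p (q - p) (r - p))
        = (-1 : ℝ) ^ (q + r) * Real.Gamma ((q : ℝ) + lam) * Real.Gamma ((a : ℝ) + μ + 1) /
            (Real.Gamma lam * (q.factorial : ℝ) * ((a - q).factorial : ℝ) *
              ((b - r).factorial : ℝ) * Real.Gamma (μ - (b : ℝ) + q + r + 1)) *
            (((q + r).choose q : ℕ) : ℝ) := by
    intro q hq r hr
    rw [Finset.mem_range, Nat.lt_succ_iff] at hq hr
    have hΓm : Real.Gamma (μ - (b : ℝ) + q + r + 1) ≠ 0 :=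
      Real.Gamma_ne_zero (hpole _ (-(b : ℤ) + q + r + 1) (by push_cast; ring))
    have hper : ∀ p ∈ Finset.range (min q r + 1), F p (q - p) (r - p)
        = (-1 : ℝ) ^ (q + r) * Real.Gamma ((q : ℝ) + lam) * Real.Gamma ((a : ℝ) + μ + 1) /
            (Real.Gamma lam * (q.factorial : ℝ) * ((a - q).factorial : ℝ) *
              ((b - r).factorial : ℝ) * Real.Gamma (μ - (b : ℝ) + q + r + 1)) *
            ((q.choose p : ℝ) * (r.choose p : ℝ)) := by
      intro p hp
      rw [Finset.mem_range, Nat.lt_succ_iff] at hp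
      have hpq : p ≤ q := le_trans hp (min_le_left _ _)
      have hpr : p ≤ r := le_trans hp (min_le_right _ _)
      simp only [hFdef]
      have e1 : ((q - p : ℕ) : ℝ) + (p : ℝ) + lam = (q : ℝ) + lam := by
        push_cast [Nat.cast_sub hpq]; ring
      have e2 : (r - p) + p = r := by omega
      have e3 : a - p - (q - p) = a - q := by omega
      have e4 : b - p - (r - p) = b - r := by omega
      have e5 : μ - (b : ℝ) + ((q - p : ℕ) : ℝ) + ((r - p : ℕ) : ℝ) + 2 * (p : ℝ) + 1
          = μ - (b : ℝ) + q + r + 1 := by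
        push_cast [Nat.cast_sub hpq, Nat.cast_sub hpr]; ring
      have esign : (-1 : ℝ) ^ ((q - p) + (r - p)) = (-1 : ℝ) ^ (q + r) := by
        have h2 : q + r = (q - p) + (r - p) + 2 * p := by omega
        rw [h2, pow_add _ ((q - p) + (r - p)) (2 * p), pow_mul]
        norm_num
      rw [e1, e2, e3, e4, e5, esign]
      have hqf : ((q.factorial : ℕ) : ℝ)
          = (q.choose p : ℝ) * (p.factorial : ℝ) * ((q - p).factorial : ℝ) := by
        exact_mod_cast (Nat.choose_mul_factorial_mul_factorial hpq).symm
      have hrf : ((r.factorial : ℕ) : ℝ)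
          = (r.choose p : ℝ) * (p.factorial : ℝ) * ((r - p).factorial : ℝ) := by
        exact_mod_cast (Nat.choose_mul_factorial_mul_factorial hpr).symm
      rw [hqf, hrf]
      have hch : ((q.choose p : ℕ) : ℝ) ≠ 0 := by
        exact_mod_cast (Nat.choose_pos hpq).ne'
      have hch2 : ((r.choose p : ℕ) : ℝ) ≠ 0 := by
        exact_mod_cast (Nat.choose_pos hpr).ne'
      field_simp
    rw [Finset.sum_congr rfl hper, ← Finset.mul_sum]
    congr 1
    exact_mod_cast congrArg (Nat.cast : ℕ → ℝ) (nat_vandermonde q r)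
  rw [Finset.sum_congr rfl (fun q hq => Finset.sum_congr rfl (fun r hr => stepB q hq r hr))]
  -- Step C : Chu–Vandermonde in r
  have stepC : ∀ q ∈ Finset.range (a + 1),
      (∑ r ∈ Finset.range (b + 1),
        (-1 : ℝ) ^ (q + r) * Real.Gamma ((q : ℝ) + lam) * Real.Gamma ((a : ℝ) + μ + 1) /
            (Real.Gamma lam * (q.factorial : ℝ) * ((a - q).factorial : ℝ) *
              ((b - r).factorial : ℝ) * Real.Gamma (μ - (b : ℝ) + q + r + 1)) *
            (((q + r).choose q : ℕ) : ℝ))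
        = (-1 : ℝ) ^ q * Real.Gamma ((q : ℝ) + lam) * Real.Gamma ((a : ℝ) + μ + 1) *
            poch (μ - (b : ℝ)) b /
            (Real.Gamma lam * (q.factorial : ℝ) * ((a - q).factorial : ℝ) *
              (b.factorial : ℝ) * Real.Gamma (μ + (q : ℝ) + 1)) := by
    intro q hq
    have hβ : ∀ m : ℕ, ((q : ℝ) + 1) ≠ -(m : ℝ) := by
      intro m h
      have h1 : (0:ℝ) ≤ (q:ℝ) := Nat.cast_nonneg q
      have h2 : (0:ℝ) ≤ (m:ℝ) := Nat.cast_nonneg m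
      linarith
    have hγ : ∀ m : ℕ, (μ - (b : ℝ) + q + 1) ≠ -(m : ℝ) :=
      hpole _ (-(b : ℤ) + q + 1) (by push_cast; ring)
    have CV := gamma_vandermonde b ((q : ℝ) + 1) (μ - (b : ℝ) + q + 1) hβ hγ
    have hΓq1 : Real.Gamma (μ + (q : ℝ) + 1) ≠ 0 :=
      Real.Gamma_ne_zero (hpole _ ((q : ℤ) + 1) (by push_cast; ring))
    have hper : ∀ r ∈ Finset.range (b + 1),
        (-1 : ℝ) ^ (q + r) * Real.Gamma ((q : ℝ) + lam) * Real.Gamma ((a : ℝ) + μ + 1) /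
            (Real.Gamma lam * (q.factorial : ℝ) * ((a - q).factorial : ℝ) *
              ((b - r).factorial : ℝ) * Real.Gamma (μ - (b : ℝ) + q + r + 1)) *
            (((q + r).choose q : ℕ) : ℝ)
          = ((-1 : ℝ) ^ q * Real.Gamma ((q : ℝ) + lam) * Real.Gamma ((a : ℝ) + μ + 1) /
              (Real.Gamma lam * (q.factorial : ℝ) * (q.factorial : ℝ) *
                ((a - q).factorial : ℝ) * (b.factorial : ℝ))) *
            ((-1 : ℝ) ^ r * ((b.choose r : ℕ) : ℝ) * Real.Gamma (((q : ℝ) + 1) + r) /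
              Real.Gamma ((μ - (b : ℝ) + q + 1) + r)) := by
      intro r hr
      rw [Finset.mem_range, Nat.lt_succ_iff] at hr
      have hΓfac : Real.Gamma (((q : ℝ) + 1) + r) = (((q + r).factorial : ℕ) : ℝ) := by
        have h1 : ((q : ℝ) + 1) + r = (((q + r : ℕ) : ℝ)) + 1 := by push_cast; ring
        rw [h1, Real.Gamma_nat_eq_factorial]
      have harg : (μ - (b : ℝ) + q + 1) + r = μ - (b : ℝ) + q + r + 1 := by ring
      have hΓm : Real.Gamma (μ - (b : ℝ) + q + r + 1) ≠ 0 :=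
        Real.Gamma_ne_zero (hpole _ (-(b : ℤ) + q + r + 1) (by push_cast; ring))
      have hqr : (((q + r).factorial : ℕ) : ℝ)
          = (((q + r).choose q : ℕ) : ℝ) * (q.factorial : ℝ) * (r.factorial : ℝ) := by
        have h := Nat.choose_mul_factorial_mul_factorial (Nat.le_add_right q r)
        rw [Nat.add_sub_cancel_left] at h
        exact_mod_cast h.symm
      have hbf : ((b.factorial : ℕ) : ℝ)
          = ((b.choose r : ℕ) : ℝ) * (r.factorial : ℝ) * ((b - r).factorial : ℝ) := by
        exact_mod_cast (Nat.choose_mul_factorial_mul_factorial hr).symm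
      have hchb : ((b.choose r : ℕ) : ℝ) ≠ 0 := by
        exact_mod_cast (Nat.choose_pos hr).ne'
      rw [hΓfac, harg, hqr, hbf, pow_add]
      field_simp [hfne, hΓlam, hΓm, hchb]
    rw [Finset.sum_congr rfl hper, ← Finset.mul_sum, CV]
    have hp1 : μ - (b : ℝ) + q + 1 - ((q : ℝ) + 1) = μ - (b : ℝ) := by ring
    have hp2 : μ - (b : ℝ) + q + 1 + (b : ℝ) = μ + (q : ℝ) + 1 := by ring
    rw [hp1, hp2, Real.Gamma_nat_eq_factorial]
    field_simp [hfne, hΓlam, hΓq1]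
  rw [Finset.sum_congr rfl stepC]
  -- Step D : Chu–Vandermonde in q
  have hγ2 : ∀ m : ℕ, (μ + 1) ≠ -(m : ℝ) := hpole _ 1 (by push_cast; ring)
  have CV2 := gamma_vandermonde a lam (μ + 1) hlamm hγ2
  have hper : ∀ q ∈ Finset.range (a + 1),
      (-1 : ℝ) ^ q * Real.Gamma ((q : ℝ) + lam) * Real.Gamma ((a : ℝ) + μ + 1) *
          poch (μ - (b : ℝ)) b /
          (Real.Gamma lam * (q.factorial : ℝ) * ((a - q).factorial : ℝ) *
            (b.factorial : ℝ) * Real.Gamma (μ + (q : ℝ) + 1))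
        = (Real.Gamma ((a : ℝ) + μ + 1) * poch (μ - (b : ℝ)) b /
            (Real.Gamma lam * (a.factorial : ℝ) * (b.factorial : ℝ))) *
          ((-1 : ℝ) ^ q * ((a.choose q : ℕ) : ℝ) * Real.Gamma (lam + q) /
            Real.Gamma ((μ + 1) + q)) := by
    intro q hq
    rw [Finset.mem_range, Nat.lt_succ_iff] at hq
    have haf : ((a.factorial : ℕ) : ℝ)
        = ((a.choose q : ℕ) : ℝ) * (q.factorial : ℝ) * ((a - q).factorial : ℝ) := by
      exact_mod_cast (Nat.choose_mul_factorial_mul_factorial hq).symm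
    have e1 : (q : ℝ) + lam = lam + q := by ring
    have e2 : μ + (q : ℝ) + 1 = (μ + 1) + q := by ring
    have hΓq1 : Real.Gamma ((μ + 1) + (q : ℝ)) ≠ 0 :=
      Real.Gamma_ne_zero (hpole _ (1 + (q : ℤ)) (by push_cast; ring))
    rw [e1, e2, haf]
    have hcha : ((a.choose q : ℕ) : ℝ) ≠ 0 := by
      exact_mod_cast (Nat.choose_pos hq).ne'
    field_simp [hfne, hΓlam, hΓq1, hcha]
  rw [Finset.sum_congr rfl hper, ← Finset.mul_sum, CV2]
  have e3 : (a : ℝ) + μ + 1 = (μ + 1) + a := by ring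
  have hΓa : Real.Gamma ((μ + 1) + (a : ℝ)) ≠ 0 :=
    Real.Gamma_ne_zero (hpole _ (1 + (a : ℤ)) (by push_cast; ring))
  rw [e3]
  field_simp [hfne, hΓlam, hΓa]

/-- The constant-term/binomial identity (formulas (5.16)–(5.21) of the paper) reducing the
triple sum appearing in the `SU(2,1)` intertwining-operator computation to a ratio of
Gamma functions. Here `a = (k−l)/2` and `b = (k+l)/2` are nonnegative integers. -/
theorem su21_triple_sum_identity (k l δ : ℤ) (hk : 0 ≤ k) (hl : |l| ≤ k)
    (hkl : k % 2 = l % 2) (lam : ℝ) (hlam : 0 < lam) (hlamZ : ∀ t : ℤ, lam ≠ t)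
    (a b : ℕ) (ha : (a : ℤ) = (k - l) / 2) (hb : (b : ℤ) = (k + l) / 2) :
    (∑ p ∈ Finset.range (min a b + 1), ∑ K₁ ∈ Finset.range (a - p + 1),
        ∑ K₂ ∈ Finset.range (b - p + 1),
        (-1 : ℝ) ^ (K₁ + K₂) *
          (Real.Gamma ((K₁ : ℝ) + (p : ℝ) + lam) /
            (Real.Gamma lam * (K₁.factorial : ℝ) * (p.factorial : ℝ))) *
          (((K₂ + p).factorial : ℝ) / ((K₂.factorial : ℝ) * (p.factorial : ℝ))) *
          Real.Gamma (((k : ℝ) - (l : ℝ) + lam + (δ : ℝ)) / 2 + 1) /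
          (((a - p - K₁).factorial : ℝ) * ((b - p - K₂).factorial : ℝ) *
            Real.Gamma ((lam + (δ : ℝ) - (k : ℝ) - (l : ℝ)) / 2 +
              (K₁ : ℝ) + (K₂ : ℝ) + 2 * (p : ℝ) + 1))) =
      (-1 : ℝ) ^ k *
        Real.Gamma (1 + ((k : ℝ) + (l : ℝ) - lam - (δ : ℝ)) / 2) *
        Real.Gamma ((lam - (δ : ℝ)) / 2) /
        ((b.factorial : ℝ) * (a.factorial : ℝ) * Real.Gamma (1 - (lam + (δ : ℝ)) / 2) *
          Real.Gamma ((lam - (δ : ℝ)) / 2 - ((k : ℝ) - (l : ℝ)) / 2)) := by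
  have hdvd1 : (2 : ℤ) ∣ (k - l) := by omega
  have hdvd2 : (2 : ℤ) ∣ (k + l) := by omega
  have h2aZ : 2 * (a : ℤ) = k - l := by omega
  have h2bZ : 2 * (b : ℤ) = k + l := by omega
  have hkab : k = ((a + b : ℕ) : ℤ) := by push_cast; omega
  have h2a : (k : ℝ) - (l : ℝ) = 2 * (a : ℝ) := by exact_mod_cast congrArg (Int.cast : ℤ → ℝ) h2aZ.symm
  have h2b : (k : ℝ) + (l : ℝ) = 2 * (b : ℝ) := by exact_mod_cast congrArg (Int.cast : ℤ → ℝ) h2bZ.symm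
  set μ : ℝ := (lam + (δ : ℝ)) / 2 with hμdef
  set ν : ℝ := (lam - (δ : ℝ)) / 2 with hνdef
  have hμ : ∀ t : ℤ, μ ≠ (t : ℝ) := by
    intro t h
    exact hlamZ (2 * t - δ) (by push_cast; rw [hμdef] at h; linarith)
  have hν : ∀ t : ℤ, ν ≠ (t : ℝ) := by
    intro t h
    exact hlamZ (2 * t + δ) (by push_cast; rw [hνdef] at h; linarith)
  have e1 : ((k : ℝ) - (l : ℝ) + lam + (δ : ℝ)) / 2 + 1 = (a : ℝ) + μ + 1 := by
    rw [hμdef]; rw [h2a] at *; linarith [h2a]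
  have e2 : (lam + (δ : ℝ) - (k : ℝ) - (l : ℝ)) / 2 = μ - (b : ℝ) := by
    rw [hμdef]; linarith [h2b]
  have e3 : 1 + ((k : ℝ) + (l : ℝ) - lam - (δ : ℝ)) / 2 = (1 - μ) + (b : ℝ) := by
    rw [hμdef]; linarith [h2b]
  have e4 : ν - ((k : ℝ) - (l : ℝ)) / 2 = (ν - (a : ℝ)) := by
    linarith [h2a]
  have e5 : 1 - (lam + (δ : ℝ)) / 2 = 1 - μ := by rw [hμdef]
  have e6 : ν = (ν - (a : ℝ)) + (a : ℝ) := by ring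
  rw [show Real.Gamma (((k : ℝ) - (l : ℝ) + lam + (δ : ℝ)) / 2 + 1)
      = Real.Gamma ((a : ℝ) + μ + 1) from congrArg _ e1]
  simp only [e2]
  rw [key_sum a b lam μ hlam hμ]
  -- now handle the right-hand side
  have h1μ : ∀ m : ℕ, (1 - μ) ≠ -(m : ℝ) := by
    intro m h
    exact hμ (1 + m) (by push_cast; linarith)
  have hνa : ∀ m : ℕ, (ν - (a : ℝ)) ≠ -(m : ℝ) := by
    intro m h
    exact hν ((a : ℤ) - m) (by push_cast; linarith)
  have hΓ1μ : Real.Gamma (1 - μ) ≠ 0 := Real.Gamma_ne_zero h1μ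
  have hΓνa : Real.Gamma (ν - (a : ℝ)) ≠ 0 := Real.Gamma_ne_zero hνa
  rw [e3, e4, e5, Gamma_add_nat h1μ b]
  rw [show Real.Gamma ν = Real.Gamma ((ν - (a : ℝ)) + (a : ℝ)) from congrArg _ e6,
    Gamma_add_nat hνa a]
  have hrefl1 : poch (1 - μ) b = (-1 : ℝ) ^ b * poch (μ - b) b := poch_reflect b μ
  have hrefl2 : poch (ν - (a : ℝ)) a = (-1 : ℝ) ^ a * poch (1 - ν) a := by
    have h := poch_reflect a ν
    have sa : (-1 : ℝ) ^ a * (-1 : ℝ) ^ a = 1 := by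
      rw [← pow_add, ← two_mul, pow_mul]; norm_num
    calc poch (ν - (a : ℝ)) a = ((-1 : ℝ) ^ a * (-1 : ℝ) ^ a) * poch (ν - (a : ℝ)) a := by
          rw [sa, one_mul]
      _ = (-1 : ℝ) ^ a * poch (1 - ν) a := by rw [mul_assoc, ← h]
  have hζ : (-1 : ℝ) ^ k = (-1 : ℝ) ^ a * (-1 : ℝ) ^ b := by
    rw [hkab, zpow_natCast, pow_add]
  have h1ν : (1 : ℝ) - ν = μ + 1 - lam := by
    rw [hμdef, hνdef]; ring
  rw [hrefl1, hrefl2, hζ, ← h1ν]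
  have sa : (-1 : ℝ) ^ a * (-1 : ℝ) ^ a = 1 := by
    rw [← pow_add, ← two_mul, pow_mul]; norm_num
  have sb : (-1 : ℝ) ^ b * (-1 : ℝ) ^ b = 1 := by
    rw [← pow_add, ← two_mul, pow_mul]; norm_num
  have hfne : ∀ n : ℕ, ((n.factorial : ℝ)) ≠ 0 := fun n => Nat.cast_ne_zero.2 n.factorial_ne_zero
  field_simp
  have ea : (-1:ℝ) ^ (a * 2) = 1 := by rw [mul_comm, pow_mul]; norm_num
  have eb : (-1:ℝ) ^ (b * 2) = 1 := by rw [mul_comm, pow_mul]; norm_num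
  linear_combination (-(poch (μ - (b:ℝ)) b * poch (1 - ν) a) * (-1:ℝ) ^ (b * 2)) * ea
    - (poch (μ - (b:ℝ)) b * poch (1 - ν) a) * eb
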